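/- Let F_G be symmetric positive definite, D positive definite with D² ≤ κ²F_G, and T(u) = (1/6)⟨T₃, u^{⊗3}⟩ a symmetric trilinear form satisfying |⟨T₃, h₁⊗h₂⊗h₃⟩| ≤ τ₃||Dh₁||·||Dh₂||·||Dh₃||. For A ∈ R^p let a = -F_G^{-1}(A + ∇T(F_G^{-1}A)). Then ||D^{-1}F_G(a + F_G^{-1}A)|| ≤ (τ₃/2)||D F_G^{-1} A||², and if κ²τ₃||D F_G^{-1} A|| ≤ 4/9 then ||D a|| ≤ (11/9)||D F_G^{-1} A||. -/

import Mathlib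

open Matrix

noncomputable def vnorm {p : ℕ} (x : Fin p → ℝ) : ℝ := Real.sqrt (x ⬝ᵥ x)

lemma dot_self_nonneg' {p : ℕ} (x : Fin p → ℝ) : 0 ≤ x ⬝ᵥ x :=
  Finset.sum_nonneg fun i _ => mul_self_nonneg _

lemma vnorm_nonneg {p : ℕ} (x : Fin p → ℝ) : 0 ≤ vnorm x := Real.sqrt_nonneg _

lemma vnorm_mul_self {p : ℕ} (x : Fin p → ℝ) : vnorm x * vnorm x = x ⬝ᵥ x :=
  Real.mul_self_sqrt (dot_self_nonneg' x)

lemma vnorm_neg {p : ℕ} (x : Fin p → ℝ) : vnorm (-x) = vnorm x := by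
  simp [vnorm, dotProduct]

lemma vnorm_eq_zero {p : ℕ} {x : Fin p → ℝ} (h : vnorm x = 0) : x ⬝ᵥ x = 0 := by
  have := vnorm_mul_self x; rw [h] at this; linarith

lemma dot_le_vnorm {p : ℕ} (x y : Fin p → ℝ) : x ⬝ᵥ y ≤ vnorm x * vnorm y := by
  have h := Finset.sum_mul_sq_le_sq_mul_sq Finset.univ x y
  have h2 : (x ⬝ᵥ y) ^ 2 ≤ (x ⬝ᵥ x) * (y ⬝ᵥ y) := by
    simpa [dotProduct, pow_two] using h
  have := Real.sqrt_le_sqrt h2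
  calc x ⬝ᵥ y ≤ |x ⬝ᵥ y| := le_abs_self _
    _ = Real.sqrt ((x ⬝ᵥ y) ^ 2) := (Real.sqrt_sq_eq_abs _).symm
    _ ≤ Real.sqrt ((x ⬝ᵥ x) * (y ⬝ᵥ y)) := this
    _ = vnorm x * vnorm y := Real.sqrt_mul (dot_self_nonneg' x) _

lemma vnorm_add_le {p : ℕ} (x y : Fin p → ℝ) : vnorm (x + y) ≤ vnorm x + vnorm y := by
  have key : (x + y) ⬝ᵥ (x + y) ≤ (vnorm x + vnorm y) ^ 2 := by
    have h1 := dot_le_vnorm x y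
    have h2 : (x + y) ⬝ᵥ (x + y) = x ⬝ᵥ x + 2 * (x ⬝ᵥ y) + y ⬝ᵥ y := by
      simp [add_dotProduct, dotProduct_add, dotProduct_comm y x]; ring
    rw [h2, ← vnorm_mul_self x, ← vnorm_mul_self y]; nlinarith
  calc vnorm (x + y) = Real.sqrt ((x+y) ⬝ᵥ (x+y)) := rfl
    _ ≤ Real.sqrt ((vnorm x + vnorm y) ^ 2) := Real.sqrt_le_sqrt key
    _ = vnorm x + vnorm y := by
        exact Real.sqrt_sq (add_nonneg (vnorm_nonneg x) (vnorm_nonneg y))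

lemma sym_dot {p : ℕ} (M : Matrix (Fin p) (Fin p) ℝ) (hM : Mᵀ = M) (x y : Fin p → ℝ) :
    (M *ᵥ x) ⬝ᵥ y = x ⬝ᵥ (M *ᵥ y) := by
  nth_rewrite 1 [← hM]
  rw [mulVec_transpose, dotProduct_mulVec]

lemma herm_transpose {p : ℕ} {M : Matrix (Fin p) (Fin p) ℝ} (h : M.IsHermitian) : Mᵀ = M := by
  ext i j
  have := congrFun (congrFun h i) j
  simpa [Matrix.conjTranspose_apply] using this

lemma key1 {p : ℕ} (D : Matrix (Fin p) (Fin p) ℝ) (hDT : Dᵀ = D) (hDdet : IsUnit D.det)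
    (T3 : MultilinearMap ℝ (fun _ : Fin 3 => (Fin p → ℝ)) ℝ)
    (τ₃ : ℝ) (hτ₃ : 0 ≤ τ₃)
    (hT3 : ∀ h₁ h₂ h₃ : Fin p → ℝ,
      |T3 ![h₁, h₂, h₃]| ≤ τ₃ * vnorm (D *ᵥ h₁) * vnorm (D *ᵥ h₂) * vnorm (D *ᵥ h₃))
    (g u : Fin p → ℝ) (hg : ∀ h, g ⬝ᵥ h = (1 / 2) * T3 ![u, u, h]) :
    vnorm (D⁻¹ *ᵥ g) ≤ τ₃ / 2 * vnorm (D *ᵥ u) ^ 2 := by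
  have hDinvT : (D⁻¹)ᵀ = D⁻¹ := by rw [Matrix.transpose_nonsing_inv, hDT]
  have h1 : (D⁻¹ *ᵥ g) ⬝ᵥ (D⁻¹ *ᵥ g) = g ⬝ᵥ (D⁻¹ *ᵥ (D⁻¹ *ᵥ g)) :=
    sym_dot _ hDinvT g (D⁻¹ *ᵥ g)
  have hDh : D *ᵥ (D⁻¹ *ᵥ (D⁻¹ *ᵥ g)) = D⁻¹ *ᵥ g := by
    rw [Matrix.mulVec_mulVec, Matrix.mul_nonsing_inv D hDdet, Matrix.one_mulVec]
  have habs : T3 ![u, u, D⁻¹ *ᵥ (D⁻¹ *ᵥ g)] ≤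
      τ₃ * vnorm (D *ᵥ u) * vnorm (D *ᵥ u) * vnorm (D⁻¹ *ᵥ g) := by
    have := le_trans (le_abs_self _) (hT3 u u (D⁻¹ *ᵥ (D⁻¹ *ᵥ g)))
    rwa [hDh] at this
  have h3 : vnorm (D⁻¹ *ᵥ g) * vnorm (D⁻¹ *ᵥ g) ≤
      τ₃ / 2 * vnorm (D *ᵥ u) ^ 2 * vnorm (D⁻¹ *ᵥ g) := by
    rw [vnorm_mul_self, h1, hg]
    nlinarith [vnorm_nonneg (D⁻¹ *ᵥ g)]
  rcases eq_or_lt_of_le (vnorm_nonneg (D⁻¹ *ᵥ g)) with h0 | h0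
  · rw [← h0]; positivity
  · nlinarith

lemma key2 {p : ℕ} (FG D : Matrix (Fin p) (Fin p) ℝ)
    (hDT : Dᵀ = D) (hFGdet : IsUnit FG.det) (hDdet : IsUnit D.det)
    (κ : ℝ) (hD : (κ ^ 2 • FG - D * D).PosSemidef) (x : Fin p → ℝ) :
    vnorm (D *ᵥ FG⁻¹ *ᵥ x) ≤ κ ^ 2 * vnorm (D⁻¹ *ᵥ x) := by
  set y := FG⁻¹ *ᵥ x with hy
  have h1 : (D *ᵥ y) ⬝ᵥ (D *ᵥ y) = y ⬝ᵥ ((D * D) *ᵥ y) := by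
    rw [sym_dot D hDT y (D *ᵥ y), Matrix.mulVec_mulVec]
  have h2 := hD.dotProduct_mulVec_nonneg y
  have h2' : y ⬝ᵥ ((D * D) *ᵥ y) ≤ κ ^ 2 * (y ⬝ᵥ (FG *ᵥ y)) := by
    rw [star_trivial, Matrix.sub_mulVec, Matrix.smul_mulVec,
      dotProduct_sub, dotProduct_smul] at h2
    simpa using h2
  have h3 : FG *ᵥ y = x := by
    rw [hy, Matrix.mulVec_mulVec, Matrix.mul_nonsing_inv FG hFGdet, Matrix.one_mulVec]
  have h4 : y ⬝ᵥ x = (D *ᵥ y) ⬝ᵥ (D⁻¹ *ᵥ x) := by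
    rw [sym_dot D hDT y (D⁻¹ *ᵥ x), Matrix.mulVec_mulVec,
      Matrix.mul_nonsing_inv D hDdet, Matrix.one_mulVec]
  have h5 := dot_le_vnorm (D *ᵥ y) (D⁻¹ *ᵥ x)
  have hsq : vnorm (D *ᵥ y) * vnorm (D *ᵥ y) ≤ κ ^ 2 * (vnorm (D *ᵥ y) * vnorm (D⁻¹ *ᵥ x)) := by
    rw [vnorm_mul_self, h1]
    calc y ⬝ᵥ ((D * D) *ᵥ y) ≤ κ ^ 2 * (y ⬝ᵥ (FG *ᵥ y)) := h2'
      _ = κ ^ 2 * (y ⬝ᵥ x) := by rw [h3]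
      _ = κ ^ 2 * ((D *ᵥ y) ⬝ᵥ (D⁻¹ *ᵥ x)) := by rw [h4]
      _ ≤ κ ^ 2 * (vnorm (D *ᵥ y) * vnorm (D⁻¹ *ᵥ x)) := by
          exact mul_le_mul_of_nonneg_left h5 (sq_nonneg κ)
  rcases eq_or_lt_of_le (vnorm_nonneg (D *ᵥ y)) with h0 | h0
  · rw [← h0]; exact mul_nonneg (sq_nonneg κ) (vnorm_nonneg _)
  · nlinarith [vnorm_nonneg (D⁻¹ *ᵥ x)]

/-- Properties of the third-order corrected bias vector
`a = -F_G⁻¹(A + ∇T(F_G⁻¹A))`. -/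
theorem stmt18 {p : ℕ} (FG D : Matrix (Fin p) (Fin p) ℝ)
    (hFG : FG.PosDef) (hDpd : D.PosDef)
    (κ : ℝ) (hκ : 0 < κ) (hD : (κ ^ 2 • FG - D * D).PosSemidef)
    (T3 : MultilinearMap ℝ (fun _ : Fin 3 => (Fin p → ℝ)) ℝ)
    (hsym : ∀ h₁ h₂ h₃ : Fin p → ℝ,
      T3 ![h₁, h₂, h₃] = T3 ![h₂, h₁, h₃] ∧ T3 ![h₁, h₂, h₃] = T3 ![h₁, h₃, h₂])
    (τ₃ : ℝ) (hτ₃ : 0 ≤ τ₃)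
    (hT3 : ∀ h₁ h₂ h₃ : Fin p → ℝ,
      |T3 ![h₁, h₂, h₃]| ≤ τ₃ * vnorm (D *ᵥ h₁) * vnorm (D *ᵥ h₂) * vnorm (D *ᵥ h₃))
    (gradT : (Fin p → ℝ) → Fin p → ℝ)
    (hgradT : ∀ u h, gradT u ⬝ᵥ h = (1 / 2) * T3 ![u, u, h])
    (A : Fin p → ℝ)
    (a : Fin p → ℝ) (ha : a = -(FG⁻¹ *ᵥ (A + gradT (FG⁻¹ *ᵥ A)))) :
    vnorm (D⁻¹ *ᵥ FG *ᵥ (a + FG⁻¹ *ᵥ A)) ≤ τ₃ / 2 * vnorm (D *ᵥ FG⁻¹ *ᵥ A) ^ 2 ∧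
      (κ ^ 2 * τ₃ * vnorm (D *ᵥ FG⁻¹ *ᵥ A) ≤ 4 / 9 →
        vnorm (D *ᵥ a) ≤ 11 / 9 * vnorm (D *ᵥ FG⁻¹ *ᵥ A)) := by
  have hDT : Dᵀ = D := herm_transpose hDpd.1
  have hDdet : IsUnit D.det := isUnit_iff_ne_zero.2 hDpd.det_pos.ne'
  have hFGdet : IsUnit FG.det := isUnit_iff_ne_zero.2 hFG.det_pos.ne'
  set u : Fin p → ℝ := FG⁻¹ *ᵥ A with hu
  set g : Fin p → ℝ := gradT u with hg
  have haeq : a = -(u + FG⁻¹ *ᵥ g) := by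
    rw [ha, Matrix.mulVec_add]
  have hB : FG *ᵥ (a + u) = -g := by
    rw [haeq]
    have : -(u + FG⁻¹ *ᵥ g) + u = -(FG⁻¹ *ᵥ g) := by abel
    rw [this, Matrix.mulVec_neg, Matrix.mulVec_mulVec,
      Matrix.mul_nonsing_inv FG hFGdet, Matrix.one_mulVec]
  have hk1 : vnorm (D⁻¹ *ᵥ g) ≤ τ₃ / 2 * vnorm (D *ᵥ u) ^ 2 :=
    key1 D hDT hDdet T3 τ₃ hτ₃ hT3 g u (fun h => hgradT u h)
  constructor
  · rw [hB, Matrix.mulVec_neg, vnorm_neg]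
    exact hk1
  · intro hκτ
    have hk2 : vnorm (D *ᵥ FG⁻¹ *ᵥ g) ≤ κ ^ 2 * vnorm (D⁻¹ *ᵥ g) :=
      key2 FG D hDT hFGdet hDdet κ hD g
    have hDa : D *ᵥ a = -(D *ᵥ u + D *ᵥ FG⁻¹ *ᵥ g) := by
      rw [haeq, Matrix.mulVec_neg, Matrix.mulVec_add, Matrix.mulVec_mulVec,
        Matrix.mulVec_mulVec]
    have htri : vnorm (D *ᵥ a) ≤ vnorm (D *ᵥ u) + vnorm (D *ᵥ FG⁻¹ *ᵥ g) := by
      rw [hDa, vnorm_neg]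
      exact vnorm_add_le _ _
    have hN : 0 ≤ vnorm (D *ᵥ u) := vnorm_nonneg _
    have hκ2 : (0:ℝ) ≤ κ ^ 2 := sq_nonneg κ
    nlinarith [mul_le_mul_of_nonneg_left hk1 hκ2]
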